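/- Let A and B be real m×n matrices with all entries strictly positive. Then the normalization map (p₁, p₂) ↦ (p₁ / Σᵢ (p₁)ᵢ, p₂ / Σⱼ (p₂)ⱼ) is a bijection from the set of LCP solutions for (A, B) onto the set of Nash equilibria of the bimatrix game (A, B) with both players minimizing, and its inverse is the map (q₁, q₂) ↦ (q₁ / (q₁ᵀ B q₂), q₂ / (q₁ᵀ A q₂)). -/

import Mathlib

open scoped Matrix

/-- `(p₁, p₂)` is an LCP solution for the bimatrix game `(A, B)`:
nonnegativity, `A p₂ ≥ 𝟙`, `Bᵀ p₁ ≥ 𝟙`, and complementarity. -/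
def IsLCPSolution {m n : ℕ} (A B : Matrix (Fin m) (Fin n) ℝ)
    (p₁ : Fin m → ℝ) (p₂ : Fin n → ℝ) : Prop :=
  (∀ i, 0 ≤ p₁ i) ∧ (∀ j, 0 ≤ p₂ j) ∧
  (∀ i, 1 ≤ A.mulVec p₂ i) ∧ (∀ j, 1 ≤ Bᵀ.mulVec p₁ j) ∧
  (∀ i, p₁ i * (A.mulVec p₂ i - 1) = 0) ∧
  (∀ j, p₂ j * (Bᵀ.mulVec p₁ j - 1) = 0)

/-- Membership in the probability simplex. -/
def InSimplex {k : ℕ} (q : Fin k → ℝ) : Prop :=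
  (∀ i, 0 ≤ q i) ∧ ∑ i, q i = 1

/-- `(q₁, q₂)` is a Nash equilibrium of the bimatrix game `(A, B)` with both
players minimizing. -/
def IsBimatrixNash {m n : ℕ} (A B : Matrix (Fin m) (Fin n) ℝ)
    (q₁ : Fin m → ℝ) (q₂ : Fin n → ℝ) : Prop :=
  InSimplex q₁ ∧ InSimplex q₂ ∧
  (∀ q₁' : Fin m → ℝ, InSimplex q₁' → q₁ ⬝ᵥ A.mulVec q₂ ≤ q₁' ⬝ᵥ A.mulVec q₂) ∧
  (∀ q₂' : Fin n → ℝ, InSimplex q₂' → q₁ ⬝ᵥ B.mulVec q₂ ≤ q₁ ⬝ᵥ B.mulVec q₂')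

/- ------------------- auxiliary lemmas ------------------- -/

private lemma dot_div_left' {k : ℕ} (u w : Fin k → ℝ) (c : ℝ) :
    (fun i => u i / c) ⬝ᵥ w = (u ⬝ᵥ w) / c := by
  simp [dotProduct, div_eq_mul_inv, Finset.sum_mul, mul_right_comm]

private lemma dot_div_right' {k : ℕ} (u w : Fin k → ℝ) (c : ℝ) :
    u ⬝ᵥ (fun i => w i / c) = (u ⬝ᵥ w) / c := by
  simp [dotProduct, div_eq_mul_inv, Finset.sum_mul, mul_assoc]

private lemma mulVec_div' {m n : ℕ} (A : Matrix (Fin m) (Fin n) ℝ) (v : Fin n → ℝ)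
    (c : ℝ) (i : Fin m) : A.mulVec (fun j => v j / c) i = A.mulVec v i / c := by
  simp [Matrix.mulVec, dotProduct, div_eq_mul_inv, Finset.sum_mul, mul_assoc]

private lemma dot_mulVec_eq {m n : ℕ} (A : Matrix (Fin m) (Fin n) ℝ)
    (u : Fin m → ℝ) (w : Fin n → ℝ) : u ⬝ᵥ A.mulVec w = Aᵀ.mulVec u ⬝ᵥ w := by
  rw [Matrix.dotProduct_mulVec, ← Matrix.mulVec_transpose]

/-- standard basis vector -/
private def eVec {k : ℕ} (i : Fin k) : Fin k → ℝ := fun i' => if i' = i then 1 else 0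

private lemma eVec_simplex {k : ℕ} (i : Fin k) : InSimplex (eVec i) := by
  refine ⟨fun i' => ?_, ?_⟩
  · unfold eVec; split <;> norm_num
  · simp [eVec]

private lemma eVec_dot {k : ℕ} (i : Fin k) (w : Fin k → ℝ) : eVec i ⬝ᵥ w = w i := by
  simp [eVec, dotProduct, ite_mul]

private lemma dot_eVec {k : ℕ} (i : Fin k) (w : Fin k → ℝ) : w ⬝ᵥ eVec i = w i := by
  simp [eVec, dotProduct, mul_ite]

/-- Forward direction: an LCP solution normalizes to a Nash equilibrium;
also records the sums and equilibrium values. -/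
private lemma forward_lemma {m n : ℕ} (hm : 0 < m) (hn : 0 < n)
    (A B : Matrix (Fin m) (Fin n) ℝ)
    (p₁ : Fin m → ℝ) (p₂ : Fin n → ℝ) (hp : IsLCPSolution A B p₁ p₂) :
    (0 < ∑ i, p₁ i) ∧ (0 < ∑ j, p₂ j) ∧
    IsBimatrixNash A B (fun i => p₁ i / ∑ i', p₁ i') (fun j => p₂ j / ∑ j', p₂ j') ∧
    (fun i => p₁ i / ∑ i', p₁ i') ⬝ᵥ B.mulVec (fun j => p₂ j / ∑ j', p₂ j')
      = (∑ i, p₁ i)⁻¹ ∧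
    (fun i => p₁ i / ∑ i', p₁ i') ⬝ᵥ A.mulVec (fun j => p₂ j / ∑ j', p₂ j')
      = (∑ j, p₂ j)⁻¹ := by
  obtain ⟨h1, h2, h3, h4, h5, h6⟩ := hp
  set s₁ := ∑ i, p₁ i with hs₁def
  set s₂ := ∑ j, p₂ j with hs₂def
  have hs₁ : 0 < s₁ := by
    rcases (Finset.sum_nonneg (fun i _ => h1 i)).lt_or_eq with h | h
    · exact h
    · exfalso
      have hz : ∀ i, p₁ i = 0 := fun i =>
        le_antisymm (by
          have := (Finset.sum_eq_zero_iff_of_nonneg (fun i _ => h1 i)).mp h.symm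
          exact le_of_eq (this i (Finset.mem_univ i))) (h1 i)
      have := h4 ⟨0, hn⟩
      simp [Matrix.mulVec, dotProduct, hz] at this
      linarith
  have hs₂ : 0 < s₂ := by
    rcases (Finset.sum_nonneg (fun j _ => h2 j)).lt_or_eq with h | h
    · exact h
    · exfalso
      have hz : ∀ j, p₂ j = 0 := fun j =>
        le_antisymm (by
          have := (Finset.sum_eq_zero_iff_of_nonneg (fun j _ => h2 j)).mp h.symm
          exact le_of_eq (this j (Finset.mem_univ j))) (h2 j)
      have := h3 ⟨0, hm⟩
      simp [Matrix.mulVec, dotProduct, hz] at this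
      linarith
  have valA : p₁ ⬝ᵥ A.mulVec p₂ = s₁ := by
    unfold dotProduct
    rw [hs₁def]
    refine Finset.sum_congr rfl fun i _ => ?_
    have := h5 i
    nlinarith [h5 i]
  have valB : p₁ ⬝ᵥ B.mulVec p₂ = s₂ := by
    rw [dot_mulVec_eq]
    unfold dotProduct
    rw [hs₂def]
    refine Finset.sum_congr rfl fun j _ => ?_
    nlinarith [h6 j]
  -- the normalized strategies
  have hmulA : ∀ i, A.mulVec (fun j => p₂ j / s₂) i = A.mulVec p₂ i / s₂ :=
    fun i => mulVec_div' A p₂ s₂ i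
  have hdotA : ∀ u : Fin m → ℝ,
      u ⬝ᵥ A.mulVec (fun j => p₂ j / s₂) = (u ⬝ᵥ A.mulVec p₂) / s₂ := by
    intro u
    have : A.mulVec (fun j => p₂ j / s₂) = fun i => A.mulVec p₂ i / s₂ :=
      funext hmulA
    rw [this, dot_div_right' u (A.mulVec p₂) s₂]
  have hdotB : ∀ w : Fin n → ℝ,
      (fun i => p₁ i / s₁) ⬝ᵥ B.mulVec w = (p₁ ⬝ᵥ B.mulVec w) / s₁ := by
    intro w; exact dot_div_left' p₁ (B.mulVec w) s₁
  have hvalA : (fun i => p₁ i / s₁) ⬝ᵥ A.mulVec (fun j => p₂ j / s₂) = s₂⁻¹ := by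
    rw [dot_div_left', hdotA, valA]
    field_simp
  have hBfun : B.mulVec (fun j => p₂ j / s₂) = fun i => B.mulVec p₂ i / s₂ :=
    funext (mulVec_div' B p₂ s₂)
  have hvalB : (fun i => p₁ i / s₁) ⬝ᵥ B.mulVec (fun j => p₂ j / s₂) = s₁⁻¹ := by
    rw [hdotB, hBfun, dot_div_right', valB]
    field_simp
  refine ⟨hs₁, hs₂, ⟨⟨fun i => div_nonneg (h1 i) hs₁.le, ?_⟩,
    ⟨fun j => div_nonneg (h2 j) hs₂.le, ?_⟩, ?_, ?_⟩, hvalB, hvalA⟩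
  · rw [← Finset.sum_div]; field_simp; rfl
  · rw [← Finset.sum_div]; field_simp; rfl
  · -- player 1 optimality
    intro q₁' hq₁'
    rw [hvalA]
    have : q₁' ⬝ᵥ A.mulVec (fun j => p₂ j / s₂) = (q₁' ⬝ᵥ A.mulVec p₂) / s₂ :=
      hdotA q₁'
    rw [this, ge_iff_le.symm, ge_iff_le, le_div_iff₀ hs₂]
    rw [inv_mul_cancel₀ hs₂.ne']
    calc (1:ℝ) = ∑ i, q₁' i := hq₁'.2.symm
    _ ≤ ∑ i, q₁' i * A.mulVec p₂ i := by
        refine Finset.sum_le_sum fun i _ => ?_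
        nlinarith [hq₁'.1 i, h3 i]
    _ = q₁' ⬝ᵥ A.mulVec p₂ := rfl
  · -- player 2 optimality
    intro q₂' hq₂'
    rw [hvalB]
    have : (fun i => p₁ i / s₁) ⬝ᵥ B.mulVec q₂' = (p₁ ⬝ᵥ B.mulVec q₂') / s₁ :=
      hdotB q₂'
    rw [this, le_div_iff₀ hs₁, inv_mul_cancel₀ hs₁.ne']
    calc (1:ℝ) = ∑ j, q₂' j := hq₂'.2.symm
    _ ≤ ∑ j, (Bᵀ.mulVec p₁ j) * q₂' j := by
        refine Finset.sum_le_sum fun j _ => ?_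
        nlinarith [hq₂'.1 j, h4 j]
    _ = Bᵀ.mulVec p₁ ⬝ᵥ q₂' := rfl
    _ = p₁ ⬝ᵥ B.mulVec q₂' := (dot_mulVec_eq B p₁ q₂').symm

/-- Backward direction: a Nash equilibrium scales to an LCP solution;
also records positivity of values and the sums. -/
private lemma backward_lemma {m n : ℕ}
    (A B : Matrix (Fin m) (Fin n) ℝ)
    (hA : ∀ i j, 0 < A i j) (hB : ∀ i j, 0 < B i j)
    (q₁ : Fin m → ℝ) (q₂ : Fin n → ℝ) (hq : IsBimatrixNash A B q₁ q₂) :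
    (0 < q₁ ⬝ᵥ A.mulVec q₂) ∧ (0 < q₁ ⬝ᵥ B.mulVec q₂) ∧
    IsLCPSolution A B (fun i => q₁ i / (q₁ ⬝ᵥ B.mulVec q₂))
      (fun j => q₂ j / (q₁ ⬝ᵥ A.mulVec q₂)) ∧
    (∑ i, q₁ i / (q₁ ⬝ᵥ B.mulVec q₂)) = (q₁ ⬝ᵥ B.mulVec q₂)⁻¹ ∧
    (∑ j, q₂ j / (q₁ ⬝ᵥ A.mulVec q₂)) = (q₁ ⬝ᵥ A.mulVec q₂)⁻¹ := by
  obtain ⟨⟨hq₁0, hq₁s⟩, ⟨hq₂0, hq₂s⟩, hN1, hN2⟩ := hq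
  set v₁ := q₁ ⬝ᵥ A.mulVec q₂ with hv₁def
  set v₂ := q₁ ⬝ᵥ B.mulVec q₂ with hv₂def
  obtain ⟨i₀, hi₀⟩ : ∃ i, 0 < q₁ i := by
    by_contra hcon
    push_neg at hcon
    have : ∀ i, q₁ i = 0 := fun i => le_antisymm (hcon i) (hq₁0 i)
    simp [this] at hq₁s
  obtain ⟨j₀, hj₀⟩ : ∃ j, 0 < q₂ j := by
    by_contra hcon
    push_neg at hcon
    have : ∀ j, q₂ j = 0 := fun j => le_antisymm (hcon j) (hq₂0 j)
    simp [this] at hq₂s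
  have hAq₂ : ∀ i, 0 < A.mulVec q₂ i := by
    intro i
    simp only [Matrix.mulVec, dotProduct]
    refine Finset.sum_pos' (fun j _ => mul_nonneg (hA i j).le (hq₂0 j)) ?_
    exact ⟨j₀, Finset.mem_univ j₀, mul_pos (hA i j₀) hj₀⟩
  have hBq₁ : ∀ j, 0 < Bᵀ.mulVec q₁ j := by
    intro j
    simp only [Matrix.mulVec, dotProduct, Matrix.transpose_apply]
    refine Finset.sum_pos' (fun i _ => mul_nonneg (hB i j).le (hq₁0 i)) ?_
    exact ⟨i₀, Finset.mem_univ i₀, mul_pos (hB i₀ j) hi₀⟩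
  have hv₁ : 0 < v₁ := by
    rw [hv₁def]
    refine Finset.sum_pos' (fun i _ => mul_nonneg (hq₁0 i) (hAq₂ i).le) ?_
    exact ⟨i₀, Finset.mem_univ i₀, mul_pos hi₀ (hAq₂ i₀)⟩
  have hv₂ : 0 < v₂ := by
    have : v₂ = Bᵀ.mulVec q₁ ⬝ᵥ q₂ := dot_mulVec_eq B q₁ q₂
    rw [this]
    refine Finset.sum_pos' (fun j _ => mul_nonneg (hBq₁ j).le (hq₂0 j)) ?_
    exact ⟨j₀, Finset.mem_univ j₀, mul_pos (hBq₁ j₀) hj₀⟩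
  -- best-response inequalities
  have hineqA : ∀ i, v₁ ≤ A.mulVec q₂ i := by
    intro i
    have := hN1 (eVec i) (eVec_simplex i)
    rwa [eVec_dot] at this
  have hineqB : ∀ j, v₂ ≤ Bᵀ.mulVec q₁ j := by
    intro j
    have := hN2 (eVec j) (eVec_simplex j)
    rwa [dot_mulVec_eq, dot_eVec] at this
  -- complementarity at the Nash level
  have hcompA : ∀ i, q₁ i * (A.mulVec q₂ i - v₁) = 0 := by
    have hsum : ∑ i, q₁ i * (A.mulVec q₂ i - v₁) = 0 := by
      have : ∑ i, q₁ i * (A.mulVec q₂ i - v₁)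
          = (∑ i, q₁ i * A.mulVec q₂ i) - (∑ i, q₁ i) * v₁ := by
        rw [Finset.sum_mul]
        rw [← Finset.sum_sub_distrib]
        exact Finset.sum_congr rfl fun i _ => by ring
      rw [this, hq₁s]
      have : ∑ i, q₁ i * A.mulVec q₂ i = v₁ := rfl
      rw [this]; ring
    intro i
    have := (Finset.sum_eq_zero_iff_of_nonneg
      (fun i _ => mul_nonneg (hq₁0 i) (by linarith [hineqA i]))).mp hsum i
      (Finset.mem_univ i)
    exact this
  have hcompB : ∀ j, q₂ j * (Bᵀ.mulVec q₁ j - v₂) = 0 := by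
    have hv₂' : v₂ = Bᵀ.mulVec q₁ ⬝ᵥ q₂ := dot_mulVec_eq B q₁ q₂
    have hsum : ∑ j, q₂ j * (Bᵀ.mulVec q₁ j - v₂) = 0 := by
      have : ∑ j, q₂ j * (Bᵀ.mulVec q₁ j - v₂)
          = (∑ j, Bᵀ.mulVec q₁ j * q₂ j) - (∑ j, q₂ j) * v₂ := by
        rw [Finset.sum_mul]
        rw [← Finset.sum_sub_distrib]
        exact Finset.sum_congr rfl fun j _ => by ring
      rw [this, hq₂s]
      have : ∑ j, Bᵀ.mulVec q₁ j * q₂ j = v₂ := hv₂'.symm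
      rw [this]; ring
    intro j
    exact (Finset.sum_eq_zero_iff_of_nonneg
      (fun j _ => mul_nonneg (hq₂0 j) (by linarith [hineqB j]))).mp hsum j
      (Finset.mem_univ j)
  have hmulA : ∀ i, A.mulVec (fun j => q₂ j / v₁) i = A.mulVec q₂ i / v₁ :=
    fun i => mulVec_div' A q₂ v₁ i
  have hmulB : ∀ j, Bᵀ.mulVec (fun i => q₁ i / v₂) j = Bᵀ.mulVec q₁ j / v₂ :=
    fun j => mulVec_div' Bᵀ q₁ v₂ j
  refine ⟨hv₁, hv₂, ⟨fun i => div_nonneg (hq₁0 i) hv₂.le,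
      fun j => div_nonneg (hq₂0 j) hv₁.le, ?_, ?_, ?_, ?_⟩, ?_, ?_⟩
  · intro i
    rw [hmulA i, le_div_iff₀ hv₁, one_mul]
    exact hineqA i
  · intro j
    rw [hmulB j, le_div_iff₀ hv₂, one_mul]
    exact hineqB j
  · intro i
    rw [hmulA i]
    rcases mul_eq_zero.mp (hcompA i) with h | h
    · dsimp only; rw [h]; ring
    · have : A.mulVec q₂ i = v₁ := by linarith
      rw [this, div_self hv₁.ne']; ring
  · intro j
    rw [hmulB j]
    rcases mul_eq_zero.mp (hcompB j) with h | h
    · dsimp only; rw [h]; ring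
    · have : Bᵀ.mulVec q₁ j = v₂ := by linarith
      rw [this, div_self hv₂.ne']; ring
  · rw [← Finset.sum_div, hq₁s, one_div]
  · rw [← Finset.sum_div, hq₂s, one_div]

theorem lcp_nash_normalization_bijection {m n : ℕ}
    (hm : 0 < m) (hn : 0 < n) (A B : Matrix (Fin m) (Fin n) ℝ)
    (hA : ∀ i j, 0 < A i j) (hB : ∀ i j, 0 < B i j) :
    Set.BijOn
      (fun p : (Fin m → ℝ) × (Fin n → ℝ) =>
        ((fun i => p.1 i / ∑ i', p.1 i'), (fun j => p.2 j / ∑ j', p.2 j')))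
      {p : (Fin m → ℝ) × (Fin n → ℝ) | IsLCPSolution A B p.1 p.2}
      {q : (Fin m → ℝ) × (Fin n → ℝ) | IsBimatrixNash A B q.1 q.2} ∧
    Set.InvOn
      (fun q : (Fin m → ℝ) × (Fin n → ℝ) =>
        ((fun i => q.1 i / (q.1 ⬝ᵥ B.mulVec q.2)),
         (fun j => q.2 j / (q.1 ⬝ᵥ A.mulVec q.2))))
      (fun p : (Fin m → ℝ) × (Fin n → ℝ) =>
        ((fun i => p.1 i / ∑ i', p.1 i'), (fun j => p.2 j / ∑ j', p.2 j')))
      {p : (Fin m → ℝ) × (Fin n → ℝ) | IsLCPSolution A B p.1 p.2}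
      {q : (Fin m → ℝ) × (Fin n → ℝ) | IsBimatrixNash A B q.1 q.2} := by
  set f : (Fin m → ℝ) × (Fin n → ℝ) → (Fin m → ℝ) × (Fin n → ℝ) :=
    fun p => ((fun i => p.1 i / ∑ i', p.1 i'), (fun j => p.2 j / ∑ j', p.2 j'))
    with hf
  set g : (Fin m → ℝ) × (Fin n → ℝ) → (Fin m → ℝ) × (Fin n → ℝ) :=
    fun q => ((fun i => q.1 i / (q.1 ⬝ᵥ B.mulVec q.2)),
              (fun j => q.2 j / (q.1 ⬝ᵥ A.mulVec q.2)))
    with hg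
  set S := {p : (Fin m → ℝ) × (Fin n → ℝ) | IsLCPSolution A B p.1 p.2} with hS
  set T := {q : (Fin m → ℝ) × (Fin n → ℝ) | IsBimatrixNash A B q.1 q.2} with hT
  have hmapsf : Set.MapsTo f S T := by
    intro p hp
    exact (forward_lemma hm hn A B p.1 p.2 hp).2.2.1
  have hmapsg : Set.MapsTo g T S := by
    intro q hq
    exact (backward_lemma A B hA hB q.1 q.2 hq).2.2.1
  have hleft : Set.LeftInvOn g f S := by
    intro p hp
    obtain ⟨hs₁, hs₂, _, hvB, hvA⟩ := forward_lemma hm hn A B p.1 p.2 hp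
    show g (f p) = p
    rw [hf, hg]
    dsimp only
    rw [hvB, hvA]
    apply Prod.ext
    · funext i
      dsimp only
      field_simp
    · funext j
      dsimp only
      field_simp
  have hright : Set.RightInvOn g f T := by
    intro q hq
    obtain ⟨hv₁, hv₂, _, hsum₁, hsum₂⟩ := backward_lemma A B hA hB q.1 q.2 hq
    show f (g q) = q
    rw [hf, hg]
    dsimp only
    rw [hsum₁, hsum₂]
    apply Prod.ext
    · funext i
      dsimp only
      field_simp
    · funext j
      dsimp only
      field_simp
  have hinv : Set.InvOn g f S T := ⟨hleft, hright⟩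
  exact ⟨hinv.bijOn hmapsf hmapsg, hinv⟩
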